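/- arXiv:2412.02561 — 3 statements merged into one kernel-verified Lean document; each statement's English description precedes it below -/
import Mathlib

section
/- For any two positive semidefinite Hermitian matrices A and B of the same size, and for every index j, the j-th largest eigenvalue of AB satisfies λ_j(AB) ≤ λ_max(B) · λ_j(A). -/
open Matrix
open scoped ComplexOrder

/-- The positive semidefinite square root of a positive semidefinite matrix
(definition removed from Mathlib; restored with its former meaning). -/
noncomputable def Matrix.PosSemidef.sqrt {n 𝕜 : Type*} [Fintype n] [DecidableEq n] [RCLike 𝕜]
    {A : Matrix n n 𝕜} (hA : A.PosSemidef) : Matrix n n 𝕜 :=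
  hA.1.eigenvectorUnitary.1 * diagonal ((↑) ∘ (√·) ∘ hA.1.eigenvalues) *
  (star hA.1.eigenvectorUnitary : Matrix n n 𝕜)

/-- The `j`-th largest eigenvalue of a Hermitian matrix (eigenvalues sorted decreasingly). -/
noncomputable def eigDesc {n : ℕ} {A : Matrix (Fin n) (Fin n) ℂ} (hA : A.IsHermitian) :
    Fin n → ℝ :=
  fun j => (hA.eigenvalues ∘ ⇑(Tuple.sort hA.eigenvalues)) j.rev

namespace EigAux

open Module Finset

set_option maxRecDepth 8000

variable {n : ℕ}

local notation "𝔼" => EuclideanSpace ℂ (Fin n)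

lemma repr_mulVec {A : Matrix (Fin n) (Fin n) ℂ} (β : OrthonormalBasis (Fin n) ℂ 𝔼)
    (μ : Fin n → ℝ) (hβ : ∀ i, A *ᵥ ⇑(β i) = μ i • ⇑(β i))
    (x : 𝔼) (i : Fin n) :
    β.repr (Matrix.toEuclideanLin A x) i = (μ i : ℂ) * β.repr x i := by
  classical
  have h : ∀ i, Matrix.toEuclideanLin A (β i) = (μ i : ℂ) • β i := by
    intro i
    have h2 : A *ᵥ ⇑(β i) = (WithLp.equiv 2 (Fin n → ℂ)) ((μ i : ℂ) • β i) := by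
      rw [hβ i]
      funext k
      simp [WithLp.equiv, Complex.real_smul]
    apply (WithLp.equiv 2 (Fin n → ℂ)).injective
    exact h2
  conv_lhs => rw [← β.sum_repr x]
  rw [map_sum]
  simp_rw [_root_.map_smul, h]
  rw [β.repr_apply_apply, inner_sum]
  simp only [inner_smul_right, orthonormal_iff_ite.mp β.orthonormal]
  simp [Finset.sum_ite_eq, mul_comm, β.repr_apply_apply]

lemma quad_expand {A : Matrix (Fin n) (Fin n) ℂ} (β : OrthonormalBasis (Fin n) ℂ 𝔼)
    (μ : Fin n → ℝ) (hβ : ∀ i, A *ᵥ ⇑(β i) = μ i • ⇑(β i)) (x : 𝔼) :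
    (star (⇑x : Fin n → ℂ) ⬝ᵥ (A *ᵥ ⇑x)).re = ∑ i, μ i * ‖β.repr x i‖ ^ 2 := by
  have h0 : star (⇑x : Fin n → ℂ) ⬝ᵥ (A *ᵥ ⇑x)
      = (inner ℂ x (Matrix.toEuclideanLin A x) : ℂ) := by rw [dotProduct_comm]; rfl
  rw [h0, ← β.repr.inner_map_map x (Matrix.toEuclideanLin A x)]
  rw [PiLp.inner_apply]
  simp only [RCLike.inner_apply, repr_mulVec β μ hβ x]
  rw [Complex.re_sum]
  congr 1; funext i
  have : (starRingEnd ℂ) (β.repr x i) * ((μ i : ℂ) * β.repr x i)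
      = (μ i : ℂ) * ((‖β.repr x i‖ : ℝ) ^ 2 : ℝ) := by
    rw [mul_left_comm, Complex.conj_mul']
    norm_cast
  rw [mul_comm, this]
  norm_cast

lemma norm_expand (β : OrthonormalBasis (Fin n) ℂ 𝔼) (x : 𝔼) :
    (star (⇑x : Fin n → ℂ) ⬝ᵥ (⇑x : Fin n → ℂ)).re = ∑ i, ‖β.repr x i‖ ^ 2 := by
  have := quad_expand (A := (1 : Matrix (Fin n) (Fin n) ℂ)) β (fun _ => 1)
    (fun i => by simp) x
  simpa using this

lemma repr_eq_zero_of_mem_span (β : OrthonormalBasis (Fin n) ℂ 𝔼) {s : Finset (Fin n)}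
    {x : 𝔼} (hx : x ∈ Submodule.span ℂ (⇑β '' ↑s)) {i : Fin n} (hi : i ∉ s) :
    β.repr x i = 0 := by
  classical
  rw [← β.coe_toBasis] at hx
  have hsupp := (Basis.mem_span_image β.toBasis).mp hx
  have : β.toBasis.repr x i = 0 := by
    by_contra h
    exact hi (hsupp (Finsupp.mem_support_iff.mpr h))
  rwa [β.coe_toBasis_repr_apply] at this

lemma finrank_span_orthonormal (β : OrthonormalBasis (Fin n) ℂ 𝔼) (s : Finset (Fin n)) :
    finrank ℂ (Submodule.span ℂ (⇑β '' ↑s)) = s.card := by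
  classical
  have hli : LinearIndependent ℂ ((↑) : (⇑β '' ↑s : Set 𝔼) → 𝔼) := by
    have h1 : LinearIndependent ℂ (fun x : (↑s : Set (Fin n)) => β x) :=
      β.orthonormal.linearIndependent.comp _ Subtype.coe_injective
    exact ((linearIndepOn_iff_image
      (β.orthonormal.linearIndependent.injective.injOn)).mp h1)
  rw [finrank_span_set_eq_card hli]
  simp [Set.toFinset_image, Finset.card_image_of_injective _
    β.orthonormal.linearIndependent.injective]

lemma finrank_comap_ge (L : 𝔼 →ₗ[ℂ] 𝔼) (W : Submodule ℂ 𝔼) :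
    finrank ℂ W ≤ finrank ℂ (W.comap L) := by
  have h1 : W.comap L = LinearMap.ker (W.mkQ ∘ₗ L) := by
    rw [LinearMap.ker_comp, Submodule.ker_mkQ]
  have h2 := LinearMap.finrank_range_add_finrank_ker (W.mkQ ∘ₗ L)
  have h3 : finrank ℂ (LinearMap.range (W.mkQ ∘ₗ L)) ≤ finrank ℂ (𝔼 ⧸ W) :=
    Submodule.finrank_le _
  have h4 := Submodule.finrank_quotient_add_finrank W
  rw [h1]
  omega

lemma exists_ne_zero_mem_inf {S T : Submodule ℂ 𝔼}
    (h : finrank ℂ 𝔼 < finrank ℂ S + finrank ℂ T) :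
    ∃ x : 𝔼, x ≠ 0 ∧ x ∈ S ∧ x ∈ T := by
  have h1 := Submodule.finrank_sup_add_finrank_inf_eq S T
  have h2 : finrank ℂ ↥(S ⊔ T) ≤ finrank ℂ 𝔼 := Submodule.finrank_le _
  have h3 : S ⊓ T ≠ ⊥ := by
    intro h0
    rw [h0, finrank_bot] at h1
    omega
  obtain ⟨x, hx, hx0⟩ := (S ⊓ T).ne_bot_iff.mp h3
  exact ⟨x, hx0, hx.1, hx.2⟩

lemma card_Ici_add_card_Iic (k : Fin n) :
    (Finset.Ici k).card + (Finset.Iic k).card = n + 1 := by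
  classical
  have h := Finset.card_union_add_card_inter (Finset.Ici k) (Finset.Iic k)
  have hu : Finset.Ici k ∪ Finset.Iic k = Finset.univ := by
    ext i; simp [le_total]
  have hi : Finset.Ici k ∩ Finset.Iic k = {k} := by
    ext i; simp [Finset.mem_inter, le_antisymm_iff, and_comm, eq_comm]
  rw [hu, hi] at h
  simpa using h.symm

lemma quad_le_on_span {A : Matrix (Fin n) (Fin n) ℂ} (β : OrthonormalBasis (Fin n) ℂ 𝔼)
    (μ : Fin n → ℝ) (hβ : ∀ i, A *ᵥ ⇑(β i) = μ i • ⇑(β i)) {s : Finset (Fin n)} {t : ℝ}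
    (hts : ∀ i ∈ s, μ i ≤ t) {x : 𝔼} (hx : x ∈ Submodule.span ℂ (⇑β '' ↑s)) :
    (star (⇑x : Fin n → ℂ) ⬝ᵥ (A *ᵥ ⇑x)).re
      ≤ t * (star (⇑x : Fin n → ℂ) ⬝ᵥ (⇑x : Fin n → ℂ)).re := by
  rw [quad_expand β μ hβ, norm_expand β]
  have hz : ∀ i ∈ Finset.univ, i ∉ s → ‖β.repr x i‖ ^ 2 = 0 := fun i _ hi => by
    rw [repr_eq_zero_of_mem_span β hx hi]; simp
  have e1 : ∑ i : Fin n, μ i * ‖β.repr x i‖ ^ 2 = ∑ i ∈ s, μ i * ‖β.repr x i‖ ^ 2 :=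
    (Finset.sum_subset (Finset.subset_univ s)
      (fun i _ h2 => by rw [repr_eq_zero_of_mem_span β hx h2]; simp)).symm
  have e2 : ∑ i : Fin n, ‖β.repr x i‖ ^ 2 = ∑ i ∈ s, ‖β.repr x i‖ ^ 2 :=
    (Finset.sum_subset (Finset.subset_univ s) hz).symm
  rw [e1, e2, Finset.mul_sum]
  exact Finset.sum_le_sum fun i hi =>
    mul_le_mul_of_nonneg_right (hts i hi) (sq_nonneg _)

lemma le_quad_on_span {A : Matrix (Fin n) (Fin n) ℂ} (β : OrthonormalBasis (Fin n) ℂ 𝔼)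
    (μ : Fin n → ℝ) (hβ : ∀ i, A *ᵥ ⇑(β i) = μ i • ⇑(β i)) {s : Finset (Fin n)} {t : ℝ}
    (hts : ∀ i ∈ s, t ≤ μ i) {x : 𝔼} (hx : x ∈ Submodule.span ℂ (⇑β '' ↑s)) :
    t * (star (⇑x : Fin n → ℂ) ⬝ᵥ (⇑x : Fin n → ℂ)).re
      ≤ (star (⇑x : Fin n → ℂ) ⬝ᵥ (A *ᵥ ⇑x)).re := by
  rw [quad_expand β μ hβ, norm_expand β]
  have hz : ∀ i ∈ Finset.univ, i ∉ s → ‖β.repr x i‖ ^ 2 = 0 := fun i _ hi => by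
    rw [repr_eq_zero_of_mem_span β hx hi]; simp
  have e1 : ∑ i : Fin n, μ i * ‖β.repr x i‖ ^ 2 = ∑ i ∈ s, μ i * ‖β.repr x i‖ ^ 2 :=
    (Finset.sum_subset (Finset.subset_univ s)
      (fun i _ h2 => by rw [repr_eq_zero_of_mem_span β hx h2]; simp)).symm
  have e2 : ∑ i : Fin n, ‖β.repr x i‖ ^ 2 = ∑ i ∈ s, ‖β.repr x i‖ ^ 2 :=
    (Finset.sum_subset (Finset.subset_univ s) hz).symm
  rw [e1, e2, Finset.mul_sum]
  exact Finset.sum_le_sum fun i hi =>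
    mul_le_mul_of_nonneg_right (hts i hi) (sq_nonneg _)

lemma key {M H C : Matrix (Fin n) (Fin n) ℂ} (hM : M.IsHermitian) (hH : H.PosSemidef)
    (hq : ∀ x : Fin n → ℂ, star x ⬝ᵥ (M *ᵥ x) = star (C *ᵥ x) ⬝ᵥ (H *ᵥ (C *ᵥ x)))
    {c : ℝ}
    (hCb : ∀ x : Fin n → ℂ, (star (C *ᵥ x) ⬝ᵥ (C *ᵥ x)).re ≤ c * (star x ⬝ᵥ x).re)
    (j : Fin n) : eigDesc hM j ≤ c * eigDesc hH.1 j := by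
  classical
  set k : Fin n := j.rev with hk
  set σM := Tuple.sort hM.eigenvalues with hσM
  set μ : Fin n → ℝ := hM.eigenvalues ∘ σM with hμdef
  have hμmono : Monotone μ := Tuple.monotone_sort hM.eigenvalues
  set σH := Tuple.sort hH.1.eigenvalues with hσH
  set ν : Fin n → ℝ := hH.1.eigenvalues ∘ σH with hνdef
  have hνmono : Monotone ν := Tuple.monotone_sort hH.1.eigenvalues
  set βM := hM.eigenvectorBasis.reindex σM.symm with hβMdef
  have hβM : ∀ i, M *ᵥ ⇑(βM i) = μ i • ⇑(βM i) := fun i => by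
    rw [hβMdef, OrthonormalBasis.reindex_apply, Equiv.symm_symm]
    exact hM.mulVec_eigenvectorBasis (σM i)
  set βH := hH.1.eigenvectorBasis.reindex σH.symm with hβHdef
  have hβH : ∀ i, H *ᵥ ⇑(βH i) = ν i • ⇑(βH i) := fun i => by
    rw [hβHdef, OrthonormalBasis.reindex_apply, Equiv.symm_symm]
    exact hH.1.mulVec_eigenvectorBasis (σH i)
  set S := Submodule.span ℂ (⇑βM '' ↑(Finset.Ici k)) with hSdef
  set W := Submodule.span ℂ (⇑βH '' ↑(Finset.Iic k)) with hWdef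
  set L := Matrix.toEuclideanLin C with hLdef
  have hfin : finrank ℂ 𝔼 = n := finrank_euclideanSpace_fin
  have hS : finrank ℂ S = (Finset.Ici k).card := finrank_span_orthonormal βM _
  have hW : finrank ℂ W = (Finset.Iic k).card := finrank_span_orthonormal βH _
  have hT : finrank ℂ W ≤ finrank ℂ (W.comap L) := finrank_comap_ge L W
  have hcard := card_Ici_add_card_Iic k
  obtain ⟨x, hx0, hxS, hxT⟩ :=
    exists_ne_zero_mem_inf (S := S) (T := W.comap L) (by omega)
  have hLx : L x ∈ W := hxT
  set N : ℝ := (star (⇑x : Fin n → ℂ) ⬝ᵥ (⇑x : Fin n → ℂ)).re with hNdef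
  have hNpos : 0 < N := by
    have h0 : star (⇑x : Fin n → ℂ) ⬝ᵥ (⇑x : Fin n → ℂ) = @inner ℂ 𝔼 _ x x := by rw [dotProduct_comm]; rfl
    have h1 : N = ‖x‖ ^ 2 := by
      rw [hNdef, h0]
      exact inner_self_eq_norm_sq (𝕜 := ℂ) x
    rw [h1]
    exact pow_pos (norm_pos_iff.mpr hx0) 2
  have hlow : μ k * N ≤ (star (⇑x : Fin n → ℂ) ⬝ᵥ (M *ᵥ ⇑x)).re :=
    le_quad_on_span βM μ hβM (fun i hi => hμmono (Finset.mem_Ici.mp hi)) hxS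
  have hLxcoe : (⇑(L x) : Fin n → ℂ) = C *ᵥ ⇑x := rfl
  have hup : (star (⇑(L x) : Fin n → ℂ) ⬝ᵥ (H *ᵥ ⇑(L x))).re
      ≤ ν k * (star (⇑(L x) : Fin n → ℂ) ⬝ᵥ (⇑(L x) : Fin n → ℂ)).re :=
    quad_le_on_span βH ν hβH (fun i hi => hνmono (Finset.mem_Iic.mp hi)) hLx
  have hνk : 0 ≤ ν k := hH.eigenvalues_nonneg _
  have hCx := hCb ⇑x
  rw [← hLxcoe] at hCx
  have hQeq : (star (⇑x : Fin n → ℂ) ⬝ᵥ (M *ᵥ ⇑x)).re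
      = (star (⇑(L x) : Fin n → ℂ) ⬝ᵥ (H *ᵥ ⇑(L x))).re := by
    rw [hLxcoe, hq ⇑x]
  have hchain : μ k * N ≤ (c * ν k) * N := by
    calc μ k * N ≤ (star (⇑x : Fin n → ℂ) ⬝ᵥ (M *ᵥ ⇑x)).re := hlow
    _ = (star (⇑(L x) : Fin n → ℂ) ⬝ᵥ (H *ᵥ ⇑(L x))).re := hQeq
    _ ≤ ν k * (star (⇑(L x) : Fin n → ℂ) ⬝ᵥ (⇑(L x) : Fin n → ℂ)).re := hup
    _ ≤ ν k * (c * N) := mul_le_mul_of_nonneg_left hCx hνk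
    _ = (c * ν k) * N := by ring
  have hfinal : μ k ≤ c * ν k := le_of_mul_le_mul_right hchain hNpos
  exact hfinal

lemma quad_le_iSup {B : Matrix (Fin n) (Fin n) ℂ} (hB : B.IsHermitian) (x : Fin n → ℂ) :
    (star x ⬝ᵥ (B *ᵥ x)).re ≤ (⨆ i, hB.eigenvalues i) * (star x ⬝ᵥ x).re := by
  rcases Nat.eq_zero_or_pos n with hn | hn
  · subst hn
    simp [dotProduct]
  have : Nonempty (Fin n) := ⟨⟨0, hn⟩⟩
  set x' : 𝔼 := (WithLp.equiv 2 (Fin n → ℂ)).symm x with hx'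
  have hcoe : (⇑x' : Fin n → ℂ) = x := rfl
  have hmem : x' ∈ Submodule.span ℂ
      (⇑hB.eigenvectorBasis '' ↑(Finset.univ : Finset (Fin n))) := by
    rw [Finset.coe_univ, Set.image_univ, ← hB.eigenvectorBasis.coe_toBasis,
      hB.eigenvectorBasis.toBasis.span_eq]
    exact Submodule.mem_top
  have := quad_le_on_span hB.eigenvectorBasis hB.eigenvalues
    (fun i => hB.mulVec_eigenvectorBasis i)
    (s := Finset.univ) (t := ⨆ i, hB.eigenvalues i)
    (fun i _ => le_ciSup (Set.Finite.bddAbove (Set.finite_range _)) i) hmem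
  rwa [hcoe] at this

lemma sqrt_conjTranspose {B : Matrix (Fin n) (Fin n) ℂ} (hB : B.PosSemidef) :
    hB.sqrtᴴ = hB.sqrt := by
  unfold Matrix.PosSemidef.sqrt
  simp [Matrix.conjTranspose_mul, Matrix.mul_assoc, Matrix.diagonal_conjTranspose]
  have hd : ∀ f : Fin n → ℝ, star (Complex.ofReal ∘ f) = Complex.ofReal ∘ f :=
    fun f => by funext i; simp
  simp only [← Matrix.star_eq_conjTranspose, star_star, hd]

lemma sqrt_mul_self {B : Matrix (Fin n) (Fin n) ℂ} (hB : B.PosSemidef) :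
    hB.sqrt * hB.sqrt = B := by
  have hU := (Matrix.mem_unitaryGroup_iff').mp hB.1.eigenvectorUnitary.2
  conv_rhs => rw [hB.1.spectral_theorem]
  unfold Matrix.PosSemidef.sqrt
  rw [Unitary.conjStarAlgAut_apply]
  simp only [Matrix.mul_assoc]
  rw [← Matrix.mul_assoc (star _ : Matrix (Fin n) (Fin n) ℂ), hU, Matrix.one_mul,
    ← Matrix.mul_assoc (diagonal _), diagonal_mul_diagonal]
  congr 3
  funext i
  simp only [Function.comp_apply]
  exact_mod_cast congrArg (fun r : ℝ => (r : ℂ)) (Real.mul_self_sqrt (hB.eigenvalues_nonneg i))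

end EigAux

/-- For PSD Hermitian `A`, `B`, the `j`-th largest eigenvalue of `A * B`
(identified with the eigenvalues of the Hermitian matrix `√B * A * √B`, to which `A * B`
is similar) satisfies `λ_j(AB) ≤ λ_max(B) * λ_j(A)`. -/
theorem eig_mul_le_eigMax_mul {n : ℕ} {A B : Matrix (Fin n) (Fin n) ℂ}
    (hA : A.PosSemidef) (hB : B.PosSemidef)
    (hAB : (hB.sqrt * A * hB.sqrt).IsHermitian) (j : Fin n) :
    eigDesc hAB j ≤ (⨆ i, hB.1.eigenvalues i) * eigDesc hA.1 j := by
  have hsq : hB.sqrtᴴ = hB.sqrt := EigAux.sqrt_conjTranspose hB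
  have hq : ∀ x : Fin n → ℂ, star x ⬝ᵥ ((hB.sqrt * A * hB.sqrt) *ᵥ x)
      = star (hB.sqrt *ᵥ x) ⬝ᵥ (A *ᵥ (hB.sqrt *ᵥ x)) := by
    intro x
    rw [star_mulVec, hsq, ← dotProduct_mulVec]
    simp only [mulVec_mulVec, Matrix.mul_assoc]
  have hCb : ∀ x : Fin n → ℂ, (star (hB.sqrt *ᵥ x) ⬝ᵥ (hB.sqrt *ᵥ x)).re
      ≤ (⨆ i, hB.1.eigenvalues i) * (star x ⬝ᵥ x).re := by
    intro x
    have h1 : star (hB.sqrt *ᵥ x) ⬝ᵥ (hB.sqrt *ᵥ x) = star x ⬝ᵥ (B *ᵥ x) := by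
      rw [star_mulVec, hsq, ← dotProduct_mulVec, mulVec_mulVec, EigAux.sqrt_mul_self hB]
    rw [h1]
    exact EigAux.quad_le_iSup hB.1 x
  exact EigAux.key hAB hA hq hCb j
end

section
/- Let A be an n×n Hermitian matrix that is not positive definite, and let Ĥ ∈ ℂ^{m×n} be a matrix whose column corresponding to a nonpositive eigenvalue direction of A is nonzero. Then the function f(S) = −ω·log det(I + Ĥ S Ĥ^H) + Tr(A S), with ω > 0, is unbounded below over positive semidefinite matrices S. Specifically, choosing S = P·u·u^H where u is a unit eigenvector of A with eigenvalue λ ≤ 0 and Ĥu ≠ 0, f(S) → −∞ as P → ∞. -/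
open Matrix
open scoped ComplexOrder

private lemma outer_sandwich {n m : ℕ} (Hh : Matrix (Fin m) (Fin n) ℂ) (u : Fin n → ℂ) (P : ℂ) :
    Hh * (P • vecMulVec u (star u)) * Hhᴴ = P • vecMulVec (Hh *ᵥ u) (star (Hh *ᵥ u)) := by
  ext i j
  simp [mul_apply, vecMulVec_apply, mulVec, dotProduct, conjTranspose_apply,
    Finset.mul_sum, Finset.sum_mul, mul_comm, mul_assoc, mul_left_comm, map_sum]

private lemma trace_mul_outer {n : ℕ} (A : Matrix (Fin n) (Fin n) ℂ) (u w : Fin n → ℂ) :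
    (A * vecMulVec u w).trace = w ⬝ᵥ (A *ᵥ u) := by
  rw [vecMulVec_eq Unit, ← Matrix.mul_assoc, trace_mul_comm, ← replicateCol_mulVec, replicateRow_mul_replicateCol]
  simp [Matrix.trace]

private lemma det_one_add_outer {n : ℕ} (v : Fin n → ℂ) (P : ℂ) :
    det (1 + P • vecMulVec v (star v)) = 1 + P * (star v ⬝ᵥ v) := by
  have : P • vecMulVec v (star v) = replicateCol Unit (P • v) * replicateRow Unit (star v) := by
    rw [← vecMulVec_eq]; ext i j; simp [vecMulVec_apply, mul_assoc]
  rw [this, det_one_add_replicateCol_mul_replicateRow]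
  simp only [dotProduct, Pi.smul_apply, smul_eq_mul, Finset.mul_sum]
  congr 1
  exact Finset.sum_congr rfl fun i _ => by ring

private lemma outer_posSemidef {n : ℕ} (u : Fin n → ℂ) {P : ℝ} (hP : 0 ≤ P) :
    ((P : ℂ) • vecMulVec u (star u)).PosSemidef := by
  have hM : (vecMulVec u (star u)).PosSemidef := by
    have h := posSemidef_self_mul_conjTranspose (replicateCol Unit u)
    rwa [conjTranspose_replicateCol, ← vecMulVec_eq] at h
  rw [posSemidef_iff_dotProduct_mulVec]
  constructor
  · rw [IsHermitian, conjTranspose_smul, hM.isHermitian.eq]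
    simp [Complex.conj_ofReal]
  · intro x
    rw [smul_mulVec, dotProduct_smul, smul_eq_mul]
    exact mul_nonneg (by exact_mod_cast Complex.zero_le_real.mpr hP) ((posSemidef_iff_dotProduct_mulVec.mp hM).2 x)

/-- If the Hermitian matrix `A` is not positive definite (witnessed by a unit eigenvector `u`
with eigenvalue `λ ≤ 0` such that `Ĥ u ≠ 0`), then `S ↦ -ω log det(I + Ĥ S Ĥᴴ) + Tr(A S)`
is unbounded below over PSD matrices; specifically it tends to `-∞` along `S = P • u uᴴ`
as `P → ∞`. -/
theorem lagrangian_unbounded_below {n m : ℕ} {A : Matrix (Fin n) (Fin n) ℂ}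
    (hA : A.IsHermitian) {Hh : Matrix (Fin m) (Fin n) ℂ} {u : Fin n → ℂ} {lam ω : ℝ}
    (hlam : lam ≤ 0) (heig : A.mulVec u = (lam : ℂ) • u)
    (hunit : star u ⬝ᵥ u = 1) (hHu : Hh.mulVec u ≠ 0) (hω : 0 < ω) :
    (∀ c : ℝ, ∃ S : Matrix (Fin n) (Fin n) ℂ, S.PosSemidef ∧
      -ω * Real.log (((1 + Hh * S * Hhᴴ).det).re) + ((A * S).trace).re < c) ∧
    Filter.Tendsto
      (fun P : ℝ =>
        -ω * Real.log (((1 + Hh * ((P : ℂ) • vecMulVec u (star u)) * Hhᴴ).det).re)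
          + ((A * ((P : ℂ) • vecMulVec u (star u))).trace).re)
      Filter.atTop Filter.atBot := by
  set v : Fin m → ℂ := Hh *ᵥ u with hv
  set c : ℝ := ∑ i, Complex.normSq (v i) with hc
  have hvc : star v ⬝ᵥ v = (c : ℂ) := by
    simp only [hc, dotProduct, Pi.star_apply, Complex.ofReal_sum]
    exact Finset.sum_congr rfl fun i _ => by
      rw [Complex.normSq_eq_conj_mul_self]; rfl
  have hcpos : 0 < c := by
    obtain ⟨i, hi⟩ := Function.ne_iff.mp hHu
    exact Finset.sum_pos' (fun j _ => Complex.normSq_nonneg _)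
      ⟨i, Finset.mem_univ i, Complex.normSq_pos.mpr hi⟩
  -- pointwise formula
  have key : ∀ P : ℝ,
      -ω * Real.log (((1 + Hh * ((P : ℂ) • vecMulVec u (star u)) * Hhᴴ).det).re)
        + ((A * ((P : ℂ) • vecMulVec u (star u))).trace).re
      = -ω * Real.log (1 + P * c) + lam * P := by
    intro P
    have hdet : ((1 + Hh * ((P : ℂ) • vecMulVec u (star u)) * Hhᴴ).det).re = 1 + P * c := by
      rw [outer_sandwich, det_one_add_outer, hvc]
      simp
    have htr : ((A * ((P : ℂ) • vecMulVec u (star u))).trace).re = lam * P := by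
      rw [Matrix.mul_smul, trace_smul, trace_mul_outer, heig, dotProduct_smul, hunit]
      simp [mul_comm]
    rw [hdet, htr]
  have htend : Filter.Tendsto (fun P : ℝ => -ω * Real.log (1 + P * c) + lam * P)
      Filter.atTop Filter.atBot := by
    have h1 : Filter.Tendsto (fun P : ℝ => 1 + P * c) Filter.atTop Filter.atTop :=
      Filter.tendsto_atTop_add_const_left _ 1 (Filter.tendsto_id.atTop_mul_const hcpos)
    have hlog := Real.tendsto_log_atTop.comp h1
    have hneg : Filter.Tendsto (fun P : ℝ => -ω * Real.log (1 + P * c))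
        Filter.atTop Filter.atBot := by
      have h2 : (fun P : ℝ => -ω * Real.log (1 + P * c)) =
          (fun x : ℝ => -x) ∘ (fun x : ℝ => ω * x) ∘ Real.log ∘ (fun P : ℝ => 1 + P * c) := by
        funext P; simp [Function.comp, neg_mul]
      rw [h2]
      exact Filter.tendsto_neg_atTop_atBot.comp
        ((Filter.tendsto_id.const_mul_atTop hω).comp (Real.tendsto_log_atTop.comp h1))
    refine Filter.tendsto_atBot_mono' _ ?_ hneg
    filter_upwards [Filter.eventually_ge_atTop (0 : ℝ)] with P hP
    nlinarith [mul_nonneg (neg_nonneg.mpr hlam) hP]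
  have htend' : Filter.Tendsto
      (fun P : ℝ =>
        -ω * Real.log (((1 + Hh * ((P : ℂ) • vecMulVec u (star u)) * Hhᴴ).det).re)
          + ((A * ((P : ℂ) • vecMulVec u (star u))).trace).re)
      Filter.atTop Filter.atBot := by
    simpa only [funext key] using htend
  refine ⟨fun b => ?_, htend'⟩
  obtain ⟨P, hPb, hP0⟩ :=
    ((htend'.eventually_lt_atBot b).and (Filter.eventually_ge_atTop (0 : ℝ))).exists
  exact ⟨(P : ℂ) • vecMulVec u (star u), outer_posSemidef u hP0, hPb⟩
end

section
/- Suppose Ĥ^H A^{-1/2} = Û Σ̂^{1/2} V̂^H is a reduced SVD with Σ̂ = diag(σ̂₁,…,σ̂_s), σ̂_k > 0, and let D̂ = diag(d̂₁,…,d̂_s) with d̂_k = max(ω/ln 2 − 1/σ̂_k, 0). Then S* = A^{-1/2} V̂ D̂ V̂^H A^{-1/2} is positive semidefinite and log₂ det(I + Ĥ S* Ĥ^H) = Σ_{k=1}^s log₂(1 + σ̂_k d̂_k). -/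
open Matrix
open scoped ComplexOrder

/-- Closed-form optimal covariance (Theorem 1): if `Ĥ A^{-1/2} = Û Σ̂^{1/2} V̂ᴴ` is a reduced
SVD with `σ̂ k > 0` and `d̂ k = max (ω / ln 2 - 1 / σ̂ k) 0`, then
`S* = A^{-1/2} V̂ D̂ V̂ᴴ A^{-1/2}` is PSD and
`log₂ det(I + Ĥ S* Ĥᴴ) = ∑ k log₂ (1 + σ̂ k * d̂ k)`. -/
theorem optimal_covariance_structure {m n s : ℕ} {A : Matrix (Fin n) (Fin n) ℂ}
    (hA : A.PosDef) (Hh : Matrix (Fin m) (Fin n) ℂ)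
    (U : Matrix (Fin m) (Fin s) ℂ) (V : Matrix (Fin n) (Fin s) ℂ)
    (σ : Fin s → ℝ) (ω : ℝ) (hω : 0 < ω) (hσ : ∀ k, 0 < σ k)
    (hU : Uᴴ * U = 1) (hV : Vᴴ * V = 1)
    (hSVD : Hh * (hA.posSemidef.sqrt)⁻¹ =
      U * Matrix.diagonal (fun k => (Real.sqrt (σ k) : ℂ)) * Vᴴ) :
    ((hA.posSemidef.sqrt)⁻¹ * V *
        Matrix.diagonal (fun k => ((max (ω / Real.log 2 - 1 / σ k) 0 : ℝ) : ℂ)) * Vᴴ *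
        (hA.posSemidef.sqrt)⁻¹).PosSemidef ∧
    Real.logb 2
        (((1 + Hh * ((hA.posSemidef.sqrt)⁻¹ * V *
          Matrix.diagonal (fun k => ((max (ω / Real.log 2 - 1 / σ k) 0 : ℝ) : ℂ)) * Vᴴ *
          (hA.posSemidef.sqrt)⁻¹) * Hhᴴ).det).re) =
      ∑ k, Real.logb 2 (1 + σ k * max (ω / Real.log 2 - 1 / σ k) 0) := by
  set B := (hA.posSemidef.sqrt)⁻¹ with hB
  set d : Fin s → ℝ := fun k => max (ω / Real.log 2 - 1 / σ k) 0 with hd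
  have hBH : Bᴴ = B := by
    rw [hB, conjTranspose_nonsing_inv]
    congr 1
    simp only [Matrix.PosSemidef.sqrt, conjTranspose_mul, diagonal_conjTranspose, Matrix.mul_assoc]
    simp [Matrix.star_eq_conjTranspose, Function.comp_def]
    congr 3
    funext x
    simp
  set D := Matrix.diagonal (fun k => ((d k : ℝ) : ℂ)) with hD
  set Sq := Matrix.diagonal (fun k => ((Real.sqrt (σ k)) : ℂ)) with hSq
  have hDpsd : D.PosSemidef := by
    refine Matrix.posSemidef_diagonal_iff.mpr fun i => ?_
    rw [Complex.zero_le_real]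
    exact le_max_right _ _
  have hPSD : (B * V * D * Vᴴ * B).PosSemidef := by
    have := hDpsd.mul_mul_conjTranspose_same (B * V)
    rw [conjTranspose_mul, hBH] at this
    rw [show B * V * D * Vᴴ * B = B * V * D * (Vᴴ * B) from Matrix.mul_assoc _ _ _]
    exact this
  refine ⟨hPSD, ?_⟩
  have hXV : Hh * B * V = U * Sq := by
    rw [hSVD, Matrix.mul_assoc, hV, Matrix.mul_one]
  have hVB : Vᴴ * (B * Hhᴴ) = Sq * Uᴴ := by
    have h := congrArg Matrix.conjTranspose hXV
    simp only [conjTranspose_mul, hBH, Matrix.mul_assoc] at h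
    rw [h]
    congr 1
    rw [hSq, diagonal_conjTranspose,
      show (star fun k => ((Real.sqrt (σ k)):ℂ)) = fun k => ((Real.sqrt (σ k)):ℂ) by
        funext k; exact Complex.conj_ofReal _]
  have key : Hh * (B * V * D * Vᴴ * B) * Hhᴴ =
      U * Matrix.diagonal (fun k => ((σ k * d k : ℝ) : ℂ)) * Uᴴ := by
    calc Hh * (B * V * D * Vᴴ * B) * Hhᴴ
        = (Hh * B * V) * (D * (Vᴴ * (B * Hhᴴ))) := by simp only [Matrix.mul_assoc]
      _ = (U * Sq) * (D * (Sq * Uᴴ)) := by rw [hXV, hVB]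
      _ = U * (Sq * (D * Sq)) * Uᴴ := by simp only [Matrix.mul_assoc]
      _ = U * Matrix.diagonal (fun k => ((σ k * d k : ℝ) : ℂ)) * Uᴴ := by
          rw [hSq, hD, diagonal_mul_diagonal, diagonal_mul_diagonal,
            show (fun i => ((Real.sqrt (σ i)):ℂ) * (((d i : ℝ):ℂ) * ((Real.sqrt (σ i)):ℂ)))
              = fun k => ((σ k * d k : ℝ) : ℂ) by
            funext i
            have hc : ((Real.sqrt (σ i)):ℂ) * ((Real.sqrt (σ i)):ℂ) = ((σ i : ℝ) : ℂ) := by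
              rw [← Complex.ofReal_mul, Real.mul_self_sqrt (hσ i).le]
            rw [Complex.ofReal_mul, ← hc]
            ring]
  rw [key]
  have hdet : (1 + U * Matrix.diagonal (fun k => ((σ k * d k : ℝ) : ℂ)) * Uᴴ).det
      = ∏ k, ((1 + σ k * d k : ℝ) : ℂ) := by
    rw [Matrix.mul_assoc, Matrix.det_one_add_mul_comm, Matrix.mul_assoc, hU, Matrix.mul_one]
    rw [show (1 : Matrix (Fin s) (Fin s) ℂ) + Matrix.diagonal (fun k => ((σ k * d k : ℝ) : ℂ))
      = Matrix.diagonal (fun k => ((1 + σ k * d k : ℝ) : ℂ)) by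
        rw [← Matrix.diagonal_one, diagonal_add]; congr 1; funext k; push_cast; ring]
    rw [Matrix.det_diagonal]
  have hpos : ∀ k : Fin s, (0:ℝ) < 1 + σ k * d k := fun k =>
    lt_of_lt_of_le one_pos (le_add_of_nonneg_right (mul_nonneg (hσ k).le (le_max_right _ _)))
  rw [hdet, show ((∏ k, ((1 + σ k * d k : ℝ) : ℂ)).re) = ∏ k, (1 + σ k * d k) by
    rw [← Complex.ofReal_prod, Complex.ofReal_re]]
  rw [Real.logb_prod _ _ (fun k _ => (hpos k).ne')]
end
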